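/- For d = 3 and m ≥ 0: χ(v_m) = q_0^{3m(m+1)/2} q_1^{m+1} and χ(w_m) = q_0^{3m(m+1)/2 + 1} q_1^m q_2, where q_k := χ(γ_k). -/

import Mathlib

open scoped TensorProduct

noncomputable section

/-- standard basis vector `α_i` of `ℚ^n` -/
def alphaV (n : ℕ) (i : Fin n) : Fin n → ℚ := Pi.single i 1

/-- the reflection `σ_ℓ`: `α_ℓ ↦ -α_ℓ`, `α_j ↦ α_j + m α_ℓ`, `α_k ↦ α_k` otherwise -/
def sigmaR (n : ℕ) (ℓ j : Fin n) (m : ℕ) : (Fin n → ℚ) →ₗ[ℚ] (Fin n → ℚ) :=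
  (Pi.basisFun ℚ (Fin n)).constr ℚ (fun k =>
    if k = ℓ then -(alphaV n ℓ)
    else if k = j then alphaV n j + (m : ℚ) • alphaV n ℓ
    else alphaV n k)

/-- the d-th tensor power `σ_ℓ^{⊗d}` -/
def sigmaT (n d : ℕ) (ℓ j : Fin n) (m : ℕ) :
    (⨂[ℚ] _ : Fin d, (Fin n → ℚ)) →ₗ[ℚ] (⨂[ℚ] _ : Fin d, (Fin n → ℚ)) :=
  PiTensorProduct.map (fun _ => sigmaR n ℓ j m)

/-- `u_m = ((m+1)α_ℓ + α_j)^{⊗d} - (m α_ℓ + α_j)^{⊗d}` -/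
def uT (n d : ℕ) (ℓ j : Fin n) (m : ℕ) : ⨂[ℚ] _ : Fin d, (Fin n → ℚ) :=
  (PiTensorProduct.tprod ℚ fun _ : Fin d => ((m : ℚ) + 1) • alphaV n ℓ + alphaV n j)
    - (PiTensorProduct.tprod ℚ fun _ : Fin d => (m : ℚ) • alphaV n ℓ + alphaV n j)

/-- `v_m = (σ_ℓ^{⊗d}(u_m) + u_m)/2` -/
def vT (n d : ℕ) (ℓ j : Fin n) (m : ℕ) : ⨂[ℚ] _ : Fin d, (Fin n → ℚ) :=
  (1 / 2 : ℚ) • (sigmaT n d ℓ j m (uT n d ℓ j m) + uT n d ℓ j m)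

/-- `w_m = u_m - v_m` -/
def wT (n d : ℕ) (ℓ j : Fin n) (m : ℕ) : ⨂[ℚ] _ : Fin d, (Fin n → ℚ) :=
  uT n d ℓ j m - vT n d ℓ j m

/-- `γ_ν`: the sum of all basis tensors `α_{i_1}⊗…⊗α_{i_d}` with entries in `{ℓ,j}`
having exactly `ν` factors equal to `α_j`. -/
def gammaT (n d : ℕ) (ℓ j : Fin n) (ν : ℕ) : ⨂[ℚ] _ : Fin d, (Fin n → ℚ) :=
  ∑ t ∈ Finset.univ.filter
      (fun t : Fin d → Bool => (Finset.univ.filter (fun i => t i = true)).card = ν),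
    PiTensorProduct.tprod ℚ (fun i : Fin d => if t i then alphaV n j else alphaV n ℓ)

/-- `e_{m,k} = ∑_{ν=0, ν≡k (2)}^{k-2} C(k,ν) m^ν` -/
def eP (m k : ℕ) : ℤ :=
  ∑ ν ∈ Finset.range (k - 1), if ν % 2 = k % 2 then (Nat.choose k ν : ℤ) * (m : ℤ) ^ ν else 0

/-- `f_{m,k} = ∑_{ν=0, ν≡k+1 (2)}^{k-1} C(k,ν) m^ν` -/
def fP (m k : ℕ) : ℤ :=
  ∑ ν ∈ Finset.range k, if ν % 2 ≠ k % 2 then (Nat.choose k ν : ℤ) * (m : ℤ) ^ ν else 0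


lemma sigmaR_apply_l (n : ℕ) (ℓ j : Fin n) (m : ℕ) :
    sigmaR n ℓ j m (alphaV n ℓ) = -(alphaV n ℓ) := by
  have := Module.Basis.constr_basis (Pi.basisFun ℚ (Fin n)) ℚ (fun k =>
    if k = ℓ then -(alphaV n ℓ)
    else if k = j then alphaV n j + (m : ℚ) • alphaV n ℓ
    else alphaV n k) ℓ
  simpa [sigmaR, alphaV, Pi.basisFun_apply] using this

lemma sigmaR_apply_j (n : ℕ) (ℓ j : Fin n) (m : ℕ) (hlj : ℓ ≠ j) :
    sigmaR n ℓ j m (alphaV n j) = alphaV n j + (m : ℚ) • alphaV n ℓ := by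
  have := Module.Basis.constr_basis (Pi.basisFun ℚ (Fin n)) ℚ (fun k =>
    if k = ℓ then -(alphaV n ℓ)
    else if k = j then alphaV n j + (m : ℚ) • alphaV n ℓ
    else alphaV n k) j
  simpa [sigmaR, alphaV, Pi.basisFun_apply, hlj.symm] using this

lemma tprod_expand (n : ℕ) (ℓ j : Fin n) (c : ℚ) :
    (PiTensorProduct.tprod ℚ fun _ : Fin 3 => c • alphaV n ℓ + alphaV n j)
      = ∑ ν ∈ Finset.range 4, c ^ (3 - ν) • gammaT n 3 ℓ j ν := by
  have h1 : (fun _ : Fin 3 => c • alphaV n ℓ + alphaV n j)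
      = fun _ : Fin 3 => ∑ s : Bool, (if s then alphaV n j else c • alphaV n ℓ) := by
    funext i; simp [add_comm]
  rw [h1, MultilinearMap.map_sum]
  have h2 : ∀ r : Fin 3 → Bool,
      (PiTensorProduct.tprod ℚ fun i => if r i then alphaV n j else c • alphaV n ℓ)
        = c ^ (3 - (Finset.univ.filter (fun i => r i = true)).card) •
            PiTensorProduct.tprod ℚ (fun i : Fin 3 => if r i then alphaV n j else alphaV n ℓ) := by
    intro r
    have h3 : (fun i : Fin 3 => if r i then alphaV n j else c • alphaV n ℓ)
        = fun i => (if r i then (1:ℚ) else c) • (if r i then alphaV n j else alphaV n ℓ) := by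
      funext i; cases r i <;> simp
    rw [h3, MultilinearMap.map_smul_univ]
    congr 1
    rw [Finset.prod_ite, Finset.prod_const_one, one_mul, Finset.prod_const]
    congr 1
    have := Finset.card_filter_add_card_filter_not
      (s := (Finset.univ : Finset (Fin 3))) (p := fun i => r i = true)
    simp only [Finset.card_univ, Fintype.card_fin] at this
    omega
  rw [Finset.sum_congr rfl (fun r _ => h2 r)]
  rw [← Finset.sum_fiberwise_of_maps_to
      (g := fun r : Fin 3 → Bool => (Finset.univ.filter (fun i => r i = true)).card)
      (t := Finset.range 4)
      (fun r _ => by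
        have : (Finset.univ.filter (fun i => r i = true)).card ≤ 3 := by
          simpa using Finset.card_filter_le Finset.univ (fun i => r i = true)
        simp [Finset.mem_range]; omega)]
  refine Finset.sum_congr rfl (fun ν _ => ?_)
  rw [gammaT, Finset.smul_sum]
  refine Finset.sum_congr rfl (fun r hr => ?_)
  simp only [Finset.mem_filter] at hr
  rw [hr.2]

lemma u_eq (n : ℕ) (ℓ j : Fin n) (m : ℕ) :
    uT n 3 ℓ j m = (3*(m:ℚ)^2+3*m+1) • gammaT n 3 ℓ j 0
      + (2*(m:ℚ)+1) • gammaT n 3 ℓ j 1 + gammaT n 3 ℓ j 2 := by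
  rw [uT, tprod_expand n ℓ j ((m:ℚ)+1), tprod_expand n ℓ j (m:ℚ)]
  simp only [Finset.sum_range_succ, Finset.sum_range_zero, zero_add]
  norm_num
  module

lemma sigma_u_eq (n : ℕ) (ℓ j : Fin n) (m : ℕ) (hlj : ℓ ≠ j) :
    sigmaT n 3 ℓ j m (uT n 3 ℓ j m)
      = -gammaT n 3 ℓ j 0 + gammaT n 3 ℓ j 1 - gammaT n 3 ℓ j 2 := by
  have h1 : (fun _ : Fin 3 => sigmaR n ℓ j m (((m:ℚ)+1) • alphaV n ℓ + alphaV n j))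
      = fun _ : Fin 3 => (-1:ℚ) • alphaV n ℓ + alphaV n j := by
    funext i
    rw [map_add, map_smul, sigmaR_apply_l, sigmaR_apply_j n ℓ j m hlj]
    module
  have h2 : (fun _ : Fin 3 => sigmaR n ℓ j m ((m:ℚ) • alphaV n ℓ + alphaV n j))
      = fun _ : Fin 3 => (0:ℚ) • alphaV n ℓ + alphaV n j := by
    funext i
    rw [map_add, map_smul, sigmaR_apply_l, sigmaR_apply_j n ℓ j m hlj]
    module
  rw [uT, sigmaT, map_sub, PiTensorProduct.map_tprod, PiTensorProduct.map_tprod]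
  rw [show (fun i : Fin 3 => sigmaR n ℓ j m (((m:ℚ)+1) • alphaV n ℓ + alphaV n j)) = _ from h1,
      show (fun i : Fin 3 => sigmaR n ℓ j m ((m:ℚ) • alphaV n ℓ + alphaV n j)) = _ from h2,
      tprod_expand, tprod_expand]
  simp only [Finset.sum_range_succ, Finset.sum_range_zero, zero_add]
  norm_num
  module

lemma v_eq (n : ℕ) (ℓ j : Fin n) (m : ℕ) (hlj : ℓ ≠ j) :
    vT n 3 ℓ j m = (3*(m*(m+1)/2)) • gammaT n 3 ℓ j 0 + (m+1) • gammaT n 3 ℓ j 1 := by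
  set M := m*(m+1)/2 with hM
  have h : ((M : ℕ) : ℚ) * 2 = (m:ℚ)*((m:ℚ)+1) := by
    have := Nat.div_mul_cancel (Nat.even_mul_succ_self m).two_dvd
    rw [hM]
    exact_mod_cast congrArg (Nat.cast (R := ℚ)) this
  rw [vT, sigma_u_eq n ℓ j m hlj, u_eq,
      ← Nat.cast_smul_eq_nsmul ℚ (3*M), ← Nat.cast_smul_eq_nsmul ℚ (m+1)]
  push_cast
  match_scalars
  all_goals first
    | ring1
    | linear_combination (3/2 : ℚ) * h
    | linear_combination (-3/2 : ℚ) * h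

lemma w_eq (n : ℕ) (ℓ j : Fin n) (m : ℕ) (hlj : ℓ ≠ j) :
    wT n 3 ℓ j m = (3*(m*(m+1)/2)+1) • gammaT n 3 ℓ j 0 + m • gammaT n 3 ℓ j 1
      + gammaT n 3 ℓ j 2 := by
  set M := m*(m+1)/2 with hM
  have h : ((M : ℕ) : ℚ) * 2 = (m:ℚ)*((m:ℚ)+1) := by
    have := Nat.div_mul_cancel (Nat.even_mul_succ_self m).two_dvd
    rw [hM]
    exact_mod_cast congrArg (Nat.cast (R := ℚ)) this
  rw [wT, vT, sigma_u_eq n ℓ j m hlj, u_eq,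
      ← Nat.cast_smul_eq_nsmul ℚ (3*M+1), ← Nat.cast_smul_eq_nsmul ℚ m]
  push_cast
  match_scalars
  all_goals first
    | ring1
    | linear_combination (3/2 : ℚ) * h
    | linear_combination (-3/2 : ℚ) * h

/-- d = 3: `χ(v_m) = q_0^{3m(m+1)/2} q_1^{m+1}` and
`χ(w_m) = q_0^{3m(m+1)/2+1} q_1^m q_2`, where `q_k = χ(γ_k)`. -/
theorem stmt12 {K : Type*} [Field K] (n : ℕ) (ℓ j : Fin n) (hlj : ℓ ≠ j) (m : ℕ)
    (χ : (⨂[ℚ] _ : Fin 3, (Fin n → ℚ)) →+ Additive Kˣ) :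
    letI q : ℕ → Kˣ := fun k => Additive.toMul (χ (gammaT n 3 ℓ j k))
    Additive.toMul (χ (vT n 3 ℓ j m)) = q 0 ^ (3 * (m * (m + 1) / 2)) * q 1 ^ (m + 1) ∧
    Additive.toMul (χ (wT n 3 ℓ j m)) = q 0 ^ (3 * (m * (m + 1) / 2) + 1) * q 1 ^ m * q 2 := by
  constructor
  · rw [v_eq n ℓ j m hlj]
    simp only [map_add, AddMonoidHom.map_nsmul, toMul_add, toMul_nsmul]
  · rw [w_eq n ℓ j m hlj]
    simp only [map_add, AddMonoidHom.map_nsmul, toMul_add, toMul_nsmul]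

end
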